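/- Let d = 2k+1 be odd and n ≥ d. Then 2^(d-1) · d! · σ_{d,n} = Σ_{I ⊆ [n], |I| ≤ k} (-1)^{|I|} · C(n-k-|I|-1, k-|I|) · (δ(I,1)x_1 + ⋯ + δ(I,n)x_n)^d, where σ_{d,n} is the elementary symmetric polynomial of degree d in n variables, C denotes binomial coefficient, and δ(I,i) = -1 if i ∈ I, else 1. -/

import Mathlib

open MvPolynomial Finset


private lemma esymm_aux_reflect_pow (p : Polynomial ℤ) (hp : p.natDegree ≤ 1) (m : ℕ) :
    Polynomial.reflect m (p ^ m) = (Polynomial.reflect 1 p) ^ m := by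
  induction m with
  | zero => simp
  | succ m ih =>
      have : Polynomial.reflect (m + 1) (p ^ m * p) = Polynomial.reflect m (p ^ m) * Polynomial.reflect 1 p :=
        Polynomial.reflect_mul _ _ (le_trans (Polynomial.natDegree_pow_le) (by nlinarith)) hp
      rw [pow_succ, this, ih, pow_succ]

private lemma esymm_aux_reflect_one_add :
    Polynomial.reflect 1 (1 + Polynomial.X : Polynomial ℤ) = Polynomial.X + 1 := by
  have h : (1 + Polynomial.X : Polynomial ℤ) = Polynomial.C 1 + Polynomial.X := by simp
  rw [h, Polynomial.reflect_add, Polynomial.reflect_C, Polynomial.reflect_one_X]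
  simp

private lemma esymm_aux_reflect_one_sub :
    Polynomial.reflect 1 (1 - Polynomial.X : Polynomial ℤ) = Polynomial.X - 1 := by
  have h : (1 - Polynomial.X : Polynomial ℤ) = Polynomial.C 1 + Polynomial.C (-1) * Polynomial.X := by
    simp; ring
  rw [h, Polynomial.reflect_add, Polynomial.reflect_C, Polynomial.reflect_C_mul,
    Polynomial.reflect_one_X]
  simp
  ring

private lemma esymm_aux_middle_coeff_zero (k a : ℕ) (ha : Odd a) (hak : a ≤ 2 * k) :
    (((1 + Polynomial.X) ^ a * (1 - Polynomial.X) ^ (2 * k - a) : Polynomial ℤ)).coeff k = 0 := by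
  set P : Polynomial ℤ := (1 + Polynomial.X) ^ a * (1 - Polynomial.X) ^ (2 * k - a) with hP
  have hdeg1 : ((1 + Polynomial.X : Polynomial ℤ)).natDegree ≤ 1 := by
    apply le_trans (Polynomial.natDegree_add_le _ _); simp
  have hdeg2 : ((1 - Polynomial.X : Polynomial ℤ)).natDegree ≤ 1 := by
    apply le_trans (Polynomial.natDegree_sub_le _ _); simp
  have hrefl : Polynomial.reflect (2 * k) P = -P := by
    have hsplit : Polynomial.reflect (a + (2 * k - a)) P =
        Polynomial.reflect a ((1 + Polynomial.X) ^ a) *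
          Polynomial.reflect (2 * k - a) ((1 - Polynomial.X) ^ (2 * k - a)) :=
      Polynomial.reflect_mul _ _
        (le_trans Polynomial.natDegree_pow_le (by nlinarith))
        (le_trans Polynomial.natDegree_pow_le (by nlinarith))
    have hak' : a + (2 * k - a) = 2 * k := by omega
    rw [hak'] at hsplit
    rw [hsplit, esymm_aux_reflect_pow _ hdeg1, esymm_aux_reflect_pow _ hdeg2,
      esymm_aux_reflect_one_add, esymm_aux_reflect_one_sub]
    have hodd : Odd (2 * k - a) := Nat.Even.sub_odd hak (even_two_mul k) ha
    have h1 : (Polynomial.X + 1 : Polynomial ℤ) = 1 + Polynomial.X := by ring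
    have h2 : (Polynomial.X - 1 : Polynomial ℤ) ^ (2 * k - a) =
        -((1 - Polynomial.X) ^ (2 * k - a)) := by
      rw [show (Polynomial.X - 1 : Polynomial ℤ) = -(1 - Polynomial.X) by ring, hodd.neg_pow]
    rw [h1, h2, hP]
    ring
  have hc := congrArg (fun q => Polynomial.coeff q k) hrefl
  simp only [Polynomial.coeff_reflect, Polynomial.coeff_neg] at hc
  rw [Polynomial.revAt_le (by omega : k ≤ 2 * k), show 2 * k - k = k by omega] at hc
  omega

private lemma esymm_aux_core_sum (k n a : ℕ) (hn : 2 * k + 1 ≤ n) (ha : Odd a)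
    (hle : a ≤ 2 * k + 1) :
    ∑ m ∈ range (k + 1), ((n - k - m - 1).choose (k - m) : ℤ) *
      (((1 + Polynomial.X) ^ a * (1 - Polynomial.X) ^ (n - a) : Polynomial ℤ)).coeff m
      = if a = 2 * k + 1 then 4 ^ k else 0 := by
  set Q : Polynomial ℤ := (1 + Polynomial.X) ^ a * (1 - Polynomial.X) ^ (n - a) with hQ
  set V : PowerSeries ℤ := (PowerSeries.invOneSubPow ℤ (n - 2 * k)).val with hV
  have hstep1 : ∑ m ∈ range (k + 1), ((n - k - m - 1).choose (k - m) : ℤ) * Q.coeff m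
      = PowerSeries.coeff k ((Q : PowerSeries ℤ) * V) := by
    rw [PowerSeries.coeff_mul, Finset.Nat.sum_antidiagonal_eq_sum_range_succ_mk]
    refine Finset.sum_congr rfl fun m hm => ?_
    rw [Finset.mem_range] at hm
    have hm' : m ≤ k := by omega
    rw [Polynomial.coeff_coe, hV,
      PowerSeries.invOneSubPow_val_eq_mk_sub_one_add_choose_of_pos _ _ (by omega : 0 < n - 2 * k),
      PowerSeries.coeff_mk]
    have h1 : n - 2 * k - 1 + (k - m) = n - k - m - 1 := by omega
    have h2 : (n - k - m - 1) - (k - m) = n - 2 * k - 1 := by omega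
    have h3 : (n - k - m - 1).choose (k - m) = (n - k - m - 1).choose (n - 2 * k - 1) := by
      rw [← h2, Nat.choose_symm (by omega)]
    rw [h1, h3]
    ring
  rw [hstep1]
  by_cases hcase : a = 2 * k + 1
  · subst hcase
    have hcast : (Q : PowerSeries ℤ) =
        (1 + PowerSeries.X) ^ (2 * k + 1) * (1 - PowerSeries.X) ^ (n - (2 * k + 1)) := by
      rw [hQ, Polynomial.coe_mul, Polynomial.coe_pow, Polynomial.coe_pow, Polynomial.coe_add,
        Polynomial.coe_sub, Polynomial.coe_one, Polynomial.coe_X]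
    have hu : PowerSeries.invOneSubPow ℤ (n - 2 * k) =
        PowerSeries.invOneSubPow ℤ (n - 2 * k - 1) * PowerSeries.invOneSubPow ℤ 1 := by
      rw [PowerSeries.invOneSubPow_eq_inv_one_sub_pow, PowerSeries.invOneSubPow_eq_inv_one_sub_pow,
        PowerSeries.invOneSubPow_eq_inv_one_sub_pow, ← pow_add]
      congr 1
      omega
    have hkill : (1 - PowerSeries.X : PowerSeries ℤ) ^ (n - (2 * k + 1)) * V =
        (PowerSeries.invOneSubPow ℤ 1).val := by
      rw [hV, hu, Units.val_mul, ← mul_assoc]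
      have : (1 - PowerSeries.X : PowerSeries ℤ) ^ (n - (2 * k + 1)) =
          (PowerSeries.invOneSubPow ℤ (n - 2 * k - 1)).inv := by
        rw [show n - (2 * k + 1) = n - 2 * k - 1 by omega,
          PowerSeries.invOneSubPow_inv_eq_one_sub_pow]
      rw [this, Units.inv_val, one_mul]
    rw [hcast, mul_assoc, hkill, if_pos rfl]
    rw [PowerSeries.coeff_mul, Finset.Nat.sum_antidiagonal_eq_sum_range_succ_mk]
    have hterm : ∀ m ∈ range (k + 1),
        (PowerSeries.coeff m) ((1 + PowerSeries.X : PowerSeries ℤ) ^ (2 * k + 1)) *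
          (PowerSeries.coeff (k - m)) (PowerSeries.invOneSubPow ℤ 1).val
          = ((2 * k + 1).choose m : ℤ) := by
      intro m _
      have h1 : ((1 + PowerSeries.X : PowerSeries ℤ) ^ (2 * k + 1)) =
          (((1 + Polynomial.X) ^ (2 * k + 1) : Polynomial ℤ) : PowerSeries ℤ) := by
        rw [Polynomial.coe_pow, Polynomial.coe_add, Polynomial.coe_one, Polynomial.coe_X]
      rw [h1, Polynomial.coeff_coe, Polynomial.coeff_one_add_X_pow,
        show (PowerSeries.invOneSubPow ℤ 1).val = PowerSeries.mk fun j => ((0 + j).choose 0 : ℤ) from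
          PowerSeries.invOneSubPow_val_succ_eq_mk_add_choose ℤ 0,
        PowerSeries.coeff_mk]
      simp
    rw [Finset.sum_congr rfl hterm]
    have := Nat.sum_range_choose_halfway k
    have hcast2 : ∑ m ∈ range (k + 1), ((2 * k + 1).choose m : ℤ)
        = ((∑ m ∈ range (k + 1), (2 * k + 1).choose m : ℕ) : ℤ) := by push_cast; ring
    rw [hcast2, this]
    push_cast
    ring
  · have hak : a ≤ 2 * k := by omega
    have hcast : (Q : PowerSeries ℤ) =
        ((((1 + Polynomial.X) ^ a * (1 - Polynomial.X) ^ (2 * k - a) : Polynomial ℤ)) : PowerSeries ℤ)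
          * (1 - PowerSeries.X) ^ (n - 2 * k) := by
      rw [hQ]
      rw [Polynomial.coe_mul, Polynomial.coe_mul, Polynomial.coe_pow, Polynomial.coe_pow,
        Polynomial.coe_pow, Polynomial.coe_add, Polynomial.coe_sub, Polynomial.coe_one,
        Polynomial.coe_X, mul_assoc, ← pow_add]
      congr 2
      omega
    have hkill : (1 - PowerSeries.X : PowerSeries ℤ) ^ (n - 2 * k) * V = 1 := by
      rw [hV, ← PowerSeries.invOneSubPow_inv_eq_one_sub_pow, Units.inv_val]
    rw [hcast, mul_assoc, hkill, mul_one, Polynomial.coeff_coe,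
      esymm_aux_middle_coeff_zero k a ha hak, if_neg hcase]

private lemma esymm_aux_key_sum (k n : ℕ) (hn : 2 * k + 1 ≤ n) (α : Fin n → ℕ)
    (hα : ∑ i, α i = 2 * k + 1) :
    ∑ I ∈ (Finset.univ : Finset (Fin n)).powerset.filter (fun I => I.card ≤ k),
      (-1 : ℤ) ^ I.card * ((n - k - I.card - 1).choose (k - I.card) : ℤ) * (-1) ^ (∑ i ∈ I, α i)
      = if (∀ i, α i ≤ 1) then 4 ^ k else 0 := by
  classical
  set η : Fin n → ℤ := fun i => if Odd (α i) then 1 else -1 with hη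
  set A : Finset (Fin n) := univ.filter (fun i => Odd (α i)) with hA
  set a : ℕ := A.card with ha
  -- Step A : rewrite each term
  have stepA : ∀ I : Finset (Fin n),
      (-1 : ℤ) ^ I.card * ((n - k - I.card - 1).choose (k - I.card) : ℤ) * (-1) ^ (∑ i ∈ I, α i)
        = ((n - k - I.card - 1).choose (k - I.card) : ℤ) * ∏ i ∈ I, η i := by
    intro I
    have h1 : ((-1 : ℤ)) ^ (∑ i ∈ I, α i) = ∏ i ∈ I, (-1 : ℤ) ^ (α i) :=
      (Finset.prod_pow_eq_pow_sum I α (-1)).symm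
    have h2 : ∀ i, ((-1 : ℤ)) ^ (α i) = -(η i) := by
      intro i
      by_cases h : Odd (α i)
      · simp [hη, h, h.neg_one_pow]
      · simp [hη, h, (Nat.not_odd_iff_even.mp h).neg_one_pow]
    rw [h1]
    rw [Finset.prod_congr rfl (fun i _ => h2 i)]
    have h3 : ∏ i ∈ I, -η i = (-1) ^ I.card * ∏ i ∈ I, η i := by
      rw [← Finset.prod_const (-1 : ℤ), ← Finset.prod_mul_distrib]
      simp
    have h4 : ((-1 : ℤ) ^ I.card) * ((-1 : ℤ) ^ I.card) = 1 := by
      rw [← mul_pow]; norm_num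
    rw [h3, show (-1 : ℤ) ^ I.card * ((n - k - I.card - 1).choose (k - I.card) : ℤ) *
      ((-1) ^ I.card * ∏ i ∈ I, η i) = ((-1 : ℤ) ^ I.card * (-1 : ℤ) ^ I.card) *
      (((n - k - I.card - 1).choose (k - I.card) : ℤ) * ∏ i ∈ I, η i) from by ring, h4, one_mul]
  rw [Finset.sum_congr rfl (fun I _ => stepA I)]
  -- the polynomial Q
  set Q : Polynomial ℤ := ∏ i : Fin n, (Polynomial.C (η i) * Polynomial.X + 1) with hQdef
  have hQcoeff : ∀ m, Q.coeff m
      = ∑ I ∈ (Finset.univ : Finset (Fin n)).powerset,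
          if m = I.card then ∏ i ∈ I, η i else 0 := by
    intro m
    rw [hQdef, Finset.prod_add, Polynomial.finset_sum_coeff]
    refine Finset.sum_congr rfl fun I _ => ?_
    rw [Finset.prod_const, Finset.prod_mul_distrib, ← map_prod, Finset.prod_const,
      one_pow, mul_one, Polynomial.coeff_C_mul, Polynomial.coeff_X_pow]
    simp [eq_comm]
  -- step B : the subset sum equals a coefficient sum
  have stepB : ∑ I ∈ (Finset.univ : Finset (Fin n)).powerset.filter (fun I => I.card ≤ k),
      ((n - k - I.card - 1).choose (k - I.card) : ℤ) * ∏ i ∈ I, η i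
      = ∑ m ∈ range (k + 1), ((n - k - m - 1).choose (k - m) : ℤ) * Q.coeff m := by
    rw [Finset.sum_congr rfl (fun m (_ : m ∈ range (k+1)) => by rw [hQcoeff m])]
    simp_rw [Finset.mul_sum]
    rw [Finset.sum_comm]
    rw [Finset.sum_filter]
    refine Finset.sum_congr rfl fun I _ => ?_
    rw [Finset.sum_congr rfl (fun m _ => by rw [mul_ite, mul_zero])]
    rw [Finset.sum_ite_eq' (range (k + 1)) I.card
      (fun m => ((n - k - m - 1).choose (k - m) : ℤ) * ∏ i ∈ I, η i)]
    simp [Nat.lt_succ_iff]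
  -- step C : Q is (1+X)^a (1-X)^(n-a)
  have hcards : (univ.filter (fun i => ¬ Odd (α i))).card = n - a := by
    have h := Finset.card_filter_add_card_filter_not (s := (univ : Finset (Fin n)))
      (p := fun i => Odd (α i))
    rw [Finset.card_univ, Fintype.card_fin] at h
    have ha' : (univ.filter (fun i => Odd (α i))).card = a := by rw [ha, hA]
    omega
  have stepC : Q = (1 + Polynomial.X) ^ a * (1 - Polynomial.X) ^ (n - a) := by
    have e1 : ∏ i ∈ univ.filter (fun i => Odd (α i)), (Polynomial.C (η i) * Polynomial.X + 1)
        = ∏ i ∈ univ.filter (fun i => Odd (α i)), ((1 : Polynomial ℤ) + Polynomial.X) := by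
      refine Finset.prod_congr rfl fun i hi => ?_
      simp only [Finset.mem_filter] at hi
      rw [hη]
      simp only [if_pos hi.2, map_one, one_mul]
      ring
    have e2 : ∏ i ∈ univ.filter (fun i => ¬ Odd (α i)), (Polynomial.C (η i) * Polynomial.X + 1)
        = ∏ i ∈ univ.filter (fun i => ¬ Odd (α i)), ((1 : Polynomial ℤ) - Polynomial.X) := by
      refine Finset.prod_congr rfl fun i hi => ?_
      simp only [Finset.mem_filter] at hi
      rw [hη]
      simp only [if_neg hi.2, map_neg, map_one]
      ring
    rw [hQdef, ← Finset.prod_filter_mul_prod_filter_not univ (fun i => Odd (α i)), e1, e2,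
      Finset.prod_const, Finset.prod_const, hcards, ← hA, ← ha]
  -- step D : combinatorial facts about a
  have hAmem : ∀ i, i ∈ A ↔ Odd (α i) := by
    intro i; rw [hA]; simp
  have hodd_pos : ∀ i ∈ A, 1 ≤ α i := by
    intro i hi
    have := Nat.odd_iff.mp ((hAmem i).mp hi)
    omega
  have hcard_sum : a = ∑ i ∈ A, 1 := by rw [ha, Finset.card_eq_sum_ones]
  have hsumA_le : ∑ i ∈ A, α i ≤ 2 * k + 1 := by
    rw [← hα]
    exact Finset.sum_le_sum_of_subset (Finset.subset_univ A)
  have haOdd : Odd a := by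
    have hmod : (∑ i : Fin n, α i) % 2 = (∑ i : Fin n, α i % 2) % 2 :=
      Finset.sum_nat_mod _ _ _
    have hsum2 : ∑ i : Fin n, α i % 2 = a := by
      rw [ha, hA, Finset.card_filter]
      refine Finset.sum_congr rfl fun i _ => ?_
      by_cases h : Odd (α i)
      · rw [if_pos h, Nat.odd_iff.mp h]
      · rw [if_neg h, Nat.even_iff.mp (Nat.not_odd_iff_even.mp h)]
    rw [hα, hsum2] at hmod
    rw [Nat.odd_iff]
    omega
  have hale : a ≤ 2 * k + 1 := by
    calc a = ∑ i ∈ A, 1 := hcard_sum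
    _ ≤ ∑ i ∈ A, α i := Finset.sum_le_sum hodd_pos
    _ ≤ 2 * k + 1 := hsumA_le
  have hiff : (∀ i, α i ≤ 1) ↔ a = 2 * k + 1 := by
    constructor
    · intro hind
      have : ∀ i : Fin n, α i = if Odd (α i) then 1 else 0 := by
        intro i
        have h1 := hind i
        interval_cases h : α i
        · simp [Nat.odd_iff]
        · simp [Nat.odd_iff]
      rw [← hα, Finset.sum_congr rfl (fun i _ => this i), ha, hA, Finset.card_filter]
    · intro haeq
      have h1 : ∑ i ∈ A, α i = ∑ i ∈ A, 1 := by
        have := Finset.sum_le_sum hodd_pos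
        omega
      have h2 : ∀ i ∈ A, α i = 1 := by
        have := (Finset.sum_eq_sum_iff_of_le hodd_pos).mp h1.symm
        intro i hi
        exact ((this i hi)).symm
      have h3 : ∑ i ∈ univ.filter (fun i => ¬ Odd (α i)), α i = 0 := by
        have hsplit := Finset.sum_filter_add_sum_filter_not univ (fun i => Odd (α i)) α
        rw [← hA] at hsplit
        have : ∑ i ∈ A, α i = 2 * k + 1 := by omega
        rw [hα, this] at hsplit
        omega
      intro i
      by_cases h : Odd (α i)
      · rw [h2 i ((hAmem i).mpr h)]
      · have : α i = 0 := by
          exact Finset.sum_eq_zero_iff.mp h3 i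
            (by simp only [Finset.mem_filter, Finset.mem_univ, true_and]; exact h)
        omega
  rw [stepB, stepC, esymm_aux_core_sum k n a hn haOdd hale]
  by_cases hf : ∀ i, α i ≤ 1
  · rw [if_pos hf, if_pos (hiff.mp hf)]
  · rw [if_neg hf, if_neg (fun h => hf (hiff.mpr h))]

/-- Power sum decomposition of the elementary symmetric polynomial of odd degree `d = 2k+1`
in `n ≥ d` variables:
`2^(d-1) d! σ_{d,n} = ∑_{I ⊆ [n], |I| ≤ k} (-1)^{|I|} C(n-k-|I|-1, k-|I|) (δ(I,1)x_1 + ⋯)^d`. -/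
theorem esymm_odd_decomposition (d k n : ℕ) (hd : d = 2 * k + 1) (hn : d ≤ n) :
    ((2 ^ (d - 1) * d.factorial : ℕ) : MvPolynomial (Fin n) ℂ) * esymm (Fin n) ℂ d =
      ∑ I ∈ (Finset.univ : Finset (Fin n)).powerset.filter (fun I => I.card ≤ k),
        (-1 : MvPolynomial (Fin n) ℂ) ^ I.card *
          ((n - k - I.card - 1).choose (k - I.card) : MvPolynomial (Fin n) ℂ) *
          (∑ i, (if i ∈ I then (-1 : MvPolynomial (Fin n) ℂ) else 1) * X i) ^ d := by
  classical
  subst hd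
  set R := MvPolynomial (Fin n) ℂ with hR
  -- expansion of each power by the multinomial theorem
  have hexp : ∀ I : Finset (Fin n),
      (∑ i, (if i ∈ I then (-1 : R) else 1) * X i) ^ (2 * k + 1)
      = ∑ f ∈ piAntidiag (univ : Finset (Fin n)) (2 * k + 1),
          (Nat.multinomial univ f : R) *
            ((-1 : R) ^ (∑ i ∈ I, f i) * ∏ i, X i ^ f i) := by
    intro I
    rw [Finset.sum_pow_eq_sum_piAntidiag]
    refine Finset.sum_congr rfl fun f hf => ?_
    congr 1
    simp only [mul_pow]
    rw [Finset.prod_mul_distrib]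
    congr 1
    have hpt : ∀ i : Fin n, ((if i ∈ I then (-1 : R) else 1)) ^ (f i)
        = (if i ∈ I then ((-1 : R) ^ (f i)) else 1) := by
      intro i; split <;> simp
    rw [Finset.prod_congr rfl (fun i _ => hpt i), Finset.prod_ite_mem univ I _,
      Finset.univ_inter, Finset.prod_pow_eq_pow_sum]
  -- the per-monomial computation
  have main_f : ∀ f ∈ piAntidiag (univ : Finset (Fin n)) (2 * k + 1),
      ∑ I ∈ (Finset.univ : Finset (Fin n)).powerset.filter (fun I => I.card ≤ k),
        (-1 : R) ^ I.card * ((n - k - I.card - 1).choose (k - I.card) : R) *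
          ((Nat.multinomial univ f : R) * ((-1 : R) ^ (∑ i ∈ I, f i) * ∏ i, X i ^ f i))
      = (if ∀ i, f i ≤ 1 then ((4 ^ k * (2 * k + 1).factorial : ℕ) : R) else 0) *
          ∏ i, X i ^ f i := by
    intro f hf
    rw [Finset.mem_piAntidiag] at hf
    obtain ⟨hfsum, -⟩ := hf
    have h1 : ∀ I : Finset (Fin n),
        (-1 : R) ^ I.card * ((n - k - I.card - 1).choose (k - I.card) : R) *
          ((Nat.multinomial univ f : R) * ((-1 : R) ^ (∑ i ∈ I, f i) * ∏ i, X i ^ f i))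
        = ((-1 : R) ^ I.card * ((n - k - I.card - 1).choose (k - I.card) : R) *
            (-1 : R) ^ (∑ i ∈ I, f i)) *
          ((Nat.multinomial univ f : R) * ∏ i, X i ^ f i) := fun I => by ring
    rw [Finset.sum_congr rfl (fun I _ => h1 I), ← Finset.sum_mul]
    have h2 : (((∑ I ∈ (Finset.univ : Finset (Fin n)).powerset.filter (fun I => I.card ≤ k),
        (-1 : ℤ) ^ I.card * ((n - k - I.card - 1).choose (k - I.card) : ℤ) *
          (-1) ^ (∑ i ∈ I, f i)) : ℤ) : R)
        = ∑ I ∈ (Finset.univ : Finset (Fin n)).powerset.filter (fun I => I.card ≤ k),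
            ((-1 : R) ^ I.card * ((n - k - I.card - 1).choose (k - I.card) : R) *
              (-1 : R) ^ (∑ i ∈ I, f i)) := by
      push_cast
      rfl
    rw [← h2, esymm_aux_key_sum k n hn f hfsum]
    by_cases hP : ∀ i, f i ≤ 1
    · rw [if_pos hP, if_pos hP]
      have hones : ∏ i : Fin n, (f i).factorial = 1 :=
        Finset.prod_eq_one fun i _ => by
          rcases Nat.le_one_iff_eq_zero_or_eq_one.mp (hP i) with h | h <;> simp [h]
      have hmult : Nat.multinomial univ f = (2 * k + 1).factorial := by
        have hspec := Nat.multinomial_spec (univ : Finset (Fin n)) f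
        rw [hones, one_mul, hfsum] at hspec
        exact hspec
      rw [hmult]
      push_cast
      ring
    · rw [if_neg hP, if_neg hP]
      simp
  -- assemble
  symm
  calc
    ∑ I ∈ (Finset.univ : Finset (Fin n)).powerset.filter (fun I => I.card ≤ k),
        (-1 : R) ^ I.card * ((n - k - I.card - 1).choose (k - I.card) : R) *
          (∑ i, (if i ∈ I then (-1 : R) else 1) * X i) ^ (2 * k + 1)
      = ∑ I ∈ (Finset.univ : Finset (Fin n)).powerset.filter (fun I => I.card ≤ k),
          ∑ f ∈ piAntidiag (univ : Finset (Fin n)) (2 * k + 1),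
            (-1 : R) ^ I.card * ((n - k - I.card - 1).choose (k - I.card) : R) *
              ((Nat.multinomial univ f : R) * ((-1 : R) ^ (∑ i ∈ I, f i) * ∏ i, X i ^ f i)) := by
        refine Finset.sum_congr rfl fun I _ => ?_
        rw [hexp I, Finset.mul_sum]
    _ = ∑ f ∈ piAntidiag (univ : Finset (Fin n)) (2 * k + 1),
          ∑ I ∈ (Finset.univ : Finset (Fin n)).powerset.filter (fun I => I.card ≤ k),
            (-1 : R) ^ I.card * ((n - k - I.card - 1).choose (k - I.card) : R) *
              ((Nat.multinomial univ f : R) * ((-1 : R) ^ (∑ i ∈ I, f i) * ∏ i, X i ^ f i)) :=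
        Finset.sum_comm
    _ = ∑ f ∈ piAntidiag (univ : Finset (Fin n)) (2 * k + 1),
          (if ∀ i, f i ≤ 1 then ((4 ^ k * (2 * k + 1).factorial : ℕ) : R) else 0) *
            ∏ i, X i ^ f i := Finset.sum_congr rfl main_f
    _ = ((2 ^ (2 * k + 1 - 1) * (2 * k + 1).factorial : ℕ) : R) * esymm (Fin n) ℂ (2 * k + 1) := by
        have hc : (2 : ℕ) ^ (2 * k + 1 - 1) * (2 * k + 1).factorial
            = 4 ^ k * (2 * k + 1).factorial := by
          congr 1
          rw [show 2 * k + 1 - 1 = 2 * k by omega, pow_mul]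
          norm_num
        rw [hc, MvPolynomial.esymm, Finset.mul_sum]
        have hsummand : ∀ f : Fin n → ℕ,
            (if ∀ i, f i ≤ 1 then ((4 ^ k * (2 * k + 1).factorial : ℕ) : R) else 0) *
              ∏ i, X i ^ f i
            = if ∀ i, f i ≤ 1 then
                ((4 ^ k * (2 * k + 1).factorial : ℕ) : R) * ∏ i, X i ^ f i else 0 := fun f => by
          split <;> simp
        rw [Finset.sum_congr rfl (fun f _ => hsummand f), ← Finset.sum_filter]
        refine Finset.sum_nbij' (fun f => univ.filter (fun x => f x = 1))
          (fun S x => if x ∈ S then 1 else 0) ?_ ?_ ?_ ?_ ?_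
        · intro f hf
          simp only [Finset.mem_filter, Finset.mem_piAntidiag] at hf
          obtain ⟨⟨hsum, -⟩, hle1⟩ := hf
          rw [Finset.mem_powersetCard]
          refine ⟨Finset.filter_subset _ _ |>.trans (Finset.subset_univ _), ?_⟩
          rw [Finset.card_filter]
          rw [Finset.sum_congr rfl (fun x _ => ?_), hsum]
          rcases Nat.le_one_iff_eq_zero_or_eq_one.mp (hle1 x) with h | h <;> simp [h]
        · intro S hS
          rw [Finset.mem_powersetCard] at hS
          simp only [Finset.mem_filter, Finset.mem_piAntidiag]
          refine ⟨⟨?_, fun i _ => Finset.mem_univ i⟩, fun i => ?_⟩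
          · rw [Finset.sum_ite_mem, Finset.univ_inter, Finset.sum_const, smul_eq_mul,
              mul_one, hS.2]
          · split <;> omega
        · intro f hf
          simp only [Finset.mem_filter, Finset.mem_piAntidiag] at hf
          obtain ⟨-, hle1⟩ := hf
          funext x
          simp only [Finset.mem_filter, Finset.mem_univ, true_and]
          rcases Nat.le_one_iff_eq_zero_or_eq_one.mp (hle1 x) with h | h <;> simp [h]
        · intro S _
          ext x
          simp only [Finset.mem_filter, Finset.mem_univ, true_and]
          by_cases h : x ∈ S <;> simp [h]
        · intro f hf
          simp only [Finset.mem_filter, Finset.mem_piAntidiag] at hf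
          obtain ⟨-, hle1⟩ := hf
          congr 1
          rw [Finset.prod_filter]
          refine Finset.prod_congr rfl fun x _ => ?_
          rcases Nat.le_one_iff_eq_zero_or_eq_one.mp (hle1 x) with h | h <;> simp [h]
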